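/- The one-relator group G = ⟨a, b ∣ (a^b)⁻¹ aˡ (a^b) = aᵏ⟩ is isomorphic to an HNN extension of the Baumslag-Solitar group BS(l,k): namely, G ≅ ⟨a₀, a₁, b ∣ a₁⁻¹ a₀ˡ a₁ = a₀ᵏ, b⁻¹ a₀ b = a₁⟩, the HNN extension of BS(l,k) = ⟨a₀, a₁ ∣ a₁⁻¹ a₀ˡ a₁ = a₀ᵏ⟩ with stable letter b conjugating the cyclic subgroup ⟨a₀⟩ onto ⟨a₁⟩. -/
import Mathlib


namespace Stmt10

def a : FreeGroup (Fin 2) := FreeGroup.of 0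
def b : FreeGroup (Fin 2) := FreeGroup.of 1

/-- `G = ⟨a,b ∣ (a^b)⁻¹ aˡ (a^b) = aᵏ⟩` where `a^b = b⁻¹ a b`. -/
def relG (l k : ℤ) : FreeGroup (Fin 2) :=
  ((b⁻¹ * a * b)⁻¹ * a ^ l * (b⁻¹ * a * b))⁻¹ * a ^ k

abbrev G (l k : ℤ) := PresentedGroup ({relG l k} : Set (FreeGroup (Fin 2)))

/-- Generators of the HNN presentation: `0 ↦ a₀`, `1 ↦ a₁`, `2 ↦ b`. -/
def a0 : FreeGroup (Fin 3) := FreeGroup.of 0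
def a1 : FreeGroup (Fin 3) := FreeGroup.of 1
def t : FreeGroup (Fin 3) := FreeGroup.of 2

/-- Relations `a₁⁻¹ a₀ˡ a₁ = a₀ᵏ` and `b⁻¹ a₀ b = a₁` of the HNN extension
`⟨a₀, a₁, b ∣ a₁⁻¹ a₀ˡ a₁ = a₀ᵏ, b⁻¹ a₀ b = a₁⟩` of `BS(l,k)`. -/
def relsHNN (l k : ℤ) : Set (FreeGroup (Fin 3)) :=
  {a1⁻¹ * a0 ^ l * a1 * a0 ^ (-k), t⁻¹ * a0 * t * a1⁻¹}

lemma mk_rel_one {α : Type*} {rels : Set (FreeGroup α)} {r : FreeGroup α} (h : r ∈ rels) :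
    PresentedGroup.mk rels r = 1 :=
  (QuotientGroup.eq_one_iff r).mpr (Subgroup.subset_normalClosure h)

/-- `G` is isomorphic to the HNN extension of `BS(l,k)` with stable letter `b`
conjugating `a₀` to `a₁`. -/
theorem stmt10 (l k : ℤ) (hl : l ≠ 0) (hk : k ≠ 0) :
    Nonempty (G l k ≃* PresentedGroup (relsHNN l k)) := by
  classical
  let f : Fin 2 → PresentedGroup (relsHNN l k) := ![PresentedGroup.of 0, PresentedGroup.of 2]
  let g : Fin 3 → G l k :=
    ![PresentedGroup.of 0,
      (PresentedGroup.of 1)⁻¹ * PresentedGroup.of 0 * PresentedGroup.of 1,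
      PresentedGroup.of 1]
  -- relations hold in H
  have h1 : (PresentedGroup.of 1 : PresentedGroup (relsHNN l k))⁻¹ * (PresentedGroup.of 0) ^ l * PresentedGroup.of 1
      = (PresentedGroup.of 0) ^ k := by
    have h := mk_rel_one (rels := relsHNN l k) (r := a1⁻¹ * a0 ^ l * a1 * a0 ^ (-k))
      (by left; rfl)
    simp only [a0, a1, map_mul, map_inv, map_zpow, zpow_neg] at h
    exact mul_inv_eq_one.mp h
  have h2 : (PresentedGroup.of 2 : PresentedGroup (relsHNN l k))⁻¹ * PresentedGroup.of 0 * PresentedGroup.of 2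
      = PresentedGroup.of 1 := by
    have h := mk_rel_one (rels := relsHNN l k) (r := t⁻¹ * a0 * t * a1⁻¹)
      (by right; rfl)
    simp only [a0, a1, t, map_mul, map_inv] at h
    exact mul_inv_eq_one.mp h
  -- the relation holds in G
  have hrelG : ((PresentedGroup.of 1 : G l k)⁻¹ * PresentedGroup.of 0 * PresentedGroup.of 1)⁻¹
      * (PresentedGroup.of 0) ^ l
      * ((PresentedGroup.of 1 : G l k)⁻¹ * PresentedGroup.of 0 * PresentedGroup.of 1)
      = (PresentedGroup.of 0) ^ k := by
    have h := mk_rel_one (rels := ({relG l k} : Set (FreeGroup (Fin 2)))) (r := relG l k) rfl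
    simp only [relG, a, b, map_mul, map_inv, map_zpow] at h
    exact inv_mul_eq_one.mp h
  have hf : ∀ r ∈ ({relG l k} : Set (FreeGroup (Fin 2))), FreeGroup.lift f r = 1 := by
    intro r hr
    rw [Set.mem_singleton_iff] at hr
    subst hr
    simp only [relG, a, b, map_mul, map_inv, map_zpow, FreeGroup.lift_apply_of]
    show (((f 1)⁻¹ * f 0 * f 1)⁻¹ * (f 0) ^ l * ((f 1)⁻¹ * f 0 * f 1))⁻¹ * (f 0) ^ k = 1
    have hf0 : f 0 = PresentedGroup.of 0 := rfl
    have hf1 : f 1 = PresentedGroup.of 2 := rfl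
    rw [hf0, hf1, h2, h1]
    group
  have hg : ∀ r ∈ relsHNN l k, FreeGroup.lift g r = 1 := by
    intro r hr
    rcases hr with hr | hr
    · subst hr
      simp only [a0, a1, map_mul, map_inv, map_zpow, FreeGroup.lift_apply_of]
      show (g 1)⁻¹ * (g 0) ^ l * g 1 * (g 0) ^ (-k) = 1
      have hg0 : g 0 = PresentedGroup.of 0 := rfl
      have hg1 : g 1 = (PresentedGroup.of 1 : G l k)⁻¹ * PresentedGroup.of 0
          * PresentedGroup.of 1 := rfl
      rw [hg0, hg1, hrelG, zpow_neg, mul_inv_cancel]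
    · rw [Set.mem_singleton_iff] at hr
      subst hr
      simp only [a0, a1, t, map_mul, map_inv, FreeGroup.lift_apply_of]
      show (g 2)⁻¹ * g 0 * g 2 * (g 1)⁻¹ = 1
      have hg0 : g 0 = PresentedGroup.of 0 := rfl
      have hg1 : g 1 = (PresentedGroup.of 1 : G l k)⁻¹ * PresentedGroup.of 0
          * PresentedGroup.of 1 := rfl
      have hg2 : g 2 = PresentedGroup.of 1 := rfl
      rw [hg0, hg1, hg2]
      group
  let φ : G l k →* PresentedGroup (relsHNN l k) := PresentedGroup.toGroup hf
  let ψ : PresentedGroup (relsHNN l k) →* G l k := PresentedGroup.toGroup hg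
  have hψφ : ψ.comp φ = MonoidHom.id _ := by
    apply PresentedGroup.ext
    intro x
    fin_cases x <;> simp [φ, ψ, f, g]
  have hφψ : φ.comp ψ = MonoidHom.id _ := by
    apply PresentedGroup.ext
    intro x
    fin_cases x <;> simp [φ, ψ, f, g]
    · exact h2
  exact ⟨MonoidHom.toMulEquiv φ ψ hψφ hφψ⟩

end Stmt10
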